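/- With the same setup, the extension F̄ on the completion X̄ is lower semicontinuous. -/

import Mathlib

open Filter Topology UniformSpace
open scoped ENNReal

/-- The extension of `F` to the metric completion: the infimum, over Cauchy sequences in `X`
representing the point `xbar` of the completion, of the liminf of `F` along the sequence. -/
noncomputable def FrechetExtension {X : Type*} [MetricSpace X] (F : X → ℝ≥0∞)
    (xbar : Completion X) : ℝ≥0∞ :=
  ⨅ u : {u : ℕ → X // CauchySeq u ∧
      Tendsto (fun n => (u n : Completion X)) atTop (𝓝 xbar)},
    Filter.liminf (fun n => F (u.1 n)) atTop

theorem frechetExtension_lowerSemicontinuous {X : Type*} [MetricSpace X] (F : X → ℝ≥0∞)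
    (hF : LowerSemicontinuous F)
    (hA : ∀ x : X, ∃ u : ℕ → X, (∀ n, u n ≠ x) ∧ Tendsto u atTop (𝓝 x) ∧
      Tendsto (fun n => F (u n)) atTop (𝓝 (F x))) :
    LowerSemicontinuous (FrechetExtension F) := by
  intro xbar y hy
  by_contra hcon
  rw [Filter.not_eventually] at hcon
  obtain ⟨y', hyy', hy'⟩ := exists_between hy
  -- for each k, find a point v k of X close to xbar with F (v k) < y'
  have key : ∀ k : ℕ, ∃ v : X, F v < y' ∧ dist (v : Completion X) xbar < 1 / (k + 1) := by
    intro k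
    have hball : Metric.ball xbar (1 / (k + 1)) ∈ 𝓝 xbar :=
      Metric.ball_mem_nhds _ (by positivity)
    obtain ⟨z, hz1, hz2⟩ := (hcon.and_eventually hball).exists
    push_neg at hz1
    have hzlt : FrechetExtension F z < y' := lt_of_le_of_lt hz1 hyy'
    rw [FrechetExtension, iInf_lt_iff] at hzlt
    obtain ⟨⟨u, hu_cauchy, hu_tendsto⟩, hu⟩ := hzlt
    have hfreq : ∃ᶠ n in atTop, F (u n) < y' := frequently_lt_of_liminf_lt (by isBoundedDefault) hu
    have hev : ∀ᶠ n in atTop, ((u n : Completion X)) ∈ Metric.ball xbar (1 / (k + 1)) :=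
      hu_tendsto (Metric.isOpen_ball.mem_nhds hz2)
    obtain ⟨n, hn1, hn2⟩ := (hfreq.and_eventually hev).exists
    exact ⟨u n, hn1, hn2⟩
  choose v hv1 hv2 using key
  -- v converges to xbar in the completion
  have htendsto : Tendsto (fun k => (v k : Completion X)) atTop (𝓝 xbar) := by
    rw [tendsto_iff_dist_tendsto_zero]
    refine squeeze_zero (fun k => dist_nonneg) (fun k => (hv2 k).le) ?_
    exact tendsto_one_div_add_atTop_nhds_zero_nat
  have hcauchy : CauchySeq v := by
    have h1 : CauchySeq (fun k => (v k : Completion X)) := htendsto.cauchySeq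
    rw [Metric.cauchySeq_iff] at h1 ⊢
    intro ε hε
    obtain ⟨N, hN⟩ := h1 ε hε
    refine ⟨N, fun m hm n hn => ?_⟩
    rw [← UniformSpace.Completion.dist_eq]
    exact hN m hm n hn
  have hle : FrechetExtension F xbar ≤ Filter.liminf (fun k => F (v k)) atTop :=
    iInf_le (fun u : {u : ℕ → X // CauchySeq u ∧
      Tendsto (fun n => (u n : Completion X)) atTop (𝓝 xbar)} =>
        Filter.liminf (fun n => F (u.1 n)) atTop) ⟨v, hcauchy, htendsto⟩
  have hlim : Filter.liminf (fun k => F (v k)) atTop ≤ y' :=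
    liminf_le_of_frequently_le (Frequently.of_forall fun k => (hv1 k).le)
  exact absurd (lt_of_le_of_lt (hle.trans hlim) hy') (lt_irrefl _)
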